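/- Let (H(n))_{n≥0} be a sequence of independent and identically distributed real random variables supported on ℝ with continuous symmetric distribution function F, and set G(x) = 1 − F(x). Suppose the function x ↦ G⁻¹(1/x) is μ-super-slowly varying at infinity with uniformity parameter Δ > 0, where μ : (0,∞) → (1,∞) is non-decreasing and satisfies Σ_{n=1}^∞ 1/(n μ^{δ*}(n)) < ∞ for some δ* ∈ (0,Δ]. Then limsup_{n→∞} |H(n)| / G⁻¹(1/n) = 1 almost surely. -/

import Mathlib

open Filter Finset MeasureTheory ProbabilityTheory

set_option maxHeartbeats 1000000


lemma aux_indep {Ω : Type*} [MeasurableSpace Ω] {P : Measure Ω}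
    (f : ℕ → Ω → ℝ) (h : iIndepFun f P)
    (B : ℕ → Set ℝ) (hf : ∀ n, Measurable (f n)) (hB : ∀ n, MeasurableSet (B n)) :
    iIndepSet (fun n => f n ⁻¹' B n) P := by
  rw [iIndepSet_iff_iIndep]
  refine iIndepSets.iIndep (fun i => ?_) (fun i => {f i ⁻¹' B i}) (fun i => ?_)
    (fun i => rfl) ?_
  · refine MeasurableSpace.generateFrom_le fun t ht => ?_
    rw [Set.mem_singleton_iff] at ht; subst ht
    exact (hf i) (hB i)
  · exact IsPiSystem.singleton _
  · rw [iIndepSets_iff]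
    intro S g hg
    have hgeq : ∀ i ∈ S, g i = f i ⁻¹' B i := fun i hi => hg i hi
    calc P (⋂ i ∈ S, g i) = P (⋂ i ∈ S, f i ⁻¹' B i) := by
          congr 1; exact Set.iInter₂_congr hgeq
      _ = ∏ i ∈ S, P (f i ⁻¹' B i) :=
          h.measure_inter_preimage_eq_mul S (fun i _ => hB i)
      _ = ∏ i ∈ S, P (g i) := Finset.prod_congr rfl fun i hi => by rw [hgeq i hi]

lemma aux_ofReal_one_sub {x : ℝ} (hx0 : 0 ≤ x) :
    1 - ENNReal.ofReal x = ENNReal.ofReal (1 - x) := by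
  rw [ENNReal.ofReal_sub _ hx0, ENNReal.ofReal_one]


theorem stmt15 {Ω : Type*} [MeasurableSpace Ω]
    (P : Measure Ω) [IsProbabilityMeasure P]
    (H : ℕ → Ω → ℝ) (hHmeas : ∀ n, Measurable (H n))
    (hHindep : iIndepFun H P)
    (F : ℝ → ℝ) (hFcont : Continuous F) (hFmono : Monotone F)
    -- each `H n` has distribution function `F`
    (hHdist : ∀ n : ℕ, ∀ t : ℝ, (P {ω | H n ω ≤ t}).toReal = F t)
    -- `F` is supported on all of ℝ
    (hFsupp : ∀ t : ℝ, 0 < F t ∧ F t < 1)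
    -- `F` is symmetric
    (hFsymm : ∀ t : ℝ, F (-t) = 1 - F t)
    -- `Ginv` is the inverse of `G = 1 - F`
    (Ginv : ℝ → ℝ) (hGinv : ∀ p ∈ Set.Ioo (0 : ℝ) 1, 1 - F (Ginv p) = p)
    (μf : ℝ → ℝ) (hμfmono : MonotoneOn μf (Set.Ioi 0))
    (hμfgt : ∀ t : ℝ, 0 < t → 1 < μf t)
    (Δ : ℝ) (hΔ : 0 < Δ)
    -- `x ↦ Ginv (1/x)` is `μf`-super-slowly varying with uniformity parameter `Δ`
    (hSSV : ∀ ε : ℝ, 0 < ε → ∃ X : ℝ, ∀ t : ℝ, X ≤ t → ∀ δ ∈ Set.Icc (0 : ℝ) Δ,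
      |Ginv (1 / (t * μf t ^ δ)) / Ginv (1 / t) - 1| < ε)
    (δs : ℝ) (hδs : δs ∈ Set.Ioc (0 : ℝ) Δ)
    (hsum : Summable (fun n : ℕ => 1 / ((n : ℝ) * μf n ^ δs))) :
    ∀ᵐ ω ∂P,
      Filter.limsup
        (fun n : ℕ => ((|H n ω| / Ginv (1 / (n : ℝ)) : ℝ) : EReal)) atTop = 1 := by

  set a : ℕ → ℝ := fun n => Ginv (1 / (n : ℝ)) with ha
  -- basic facts
  have hF0 : F 0 = 1 / 2 := by have := hFsymm 0; rw [neg_zero] at this; linarith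
  have hFa : ∀ n : ℕ, 2 ≤ n → F (a n) = 1 - 1 / (n : ℝ) := by
    intro n hn
    have hn' : (2:ℝ) ≤ (n:ℝ) := by exact_mod_cast hn
    have := hGinv (1 / (n:ℝ)) ⟨by positivity, by rw [div_lt_one (by linarith)]; linarith⟩
    linarith
  have ha_pos : ∀ n : ℕ, 3 ≤ n → 0 < a n := by
    intro n hn
    have hn' : (3:ℝ) ≤ (n:ℝ) := by exact_mod_cast hn
    by_contra hle
    push_neg at hle
    have h1 : F (a n) ≤ F 0 := hFmono hle
    have h2 : F (a n) = 1 - 1 / (n : ℝ) := hFa n (by omega)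
    have h3 : 1 / (n:ℝ) ≤ 1/3 := by
      rw [div_le_div_iff₀ (by linarith) (by norm_num)]; linarith
    linarith
  -- distribution computations
  have hdistEq : ∀ n (t : ℝ), P {ω | H n ω ≤ t} = ENNReal.ofReal (F t) := by
    intro n t
    rw [← hHdist n t, ENNReal.ofReal_toReal (measure_ne_top _ _)]
  have hmeasIic : ∀ n (t : ℝ), MeasurableSet {ω | H n ω ≤ t} :=
    fun n t => (hHmeas n) measurableSet_Iic
  have hgt : ∀ n (t : ℝ), P {ω | t < H n ω} = ENNReal.ofReal (1 - F t) := by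
    intro n t
    have : {ω | t < H n ω} = {ω | H n ω ≤ t}ᶜ := by
      ext ω; simp [not_le]
    rw [this, measure_compl (hmeasIic n t) (measure_ne_top _ _), measure_univ,
      hdistEq n t, aux_ofReal_one_sub (hFsupp t).1.le]
  -- upper bound claim
  have claim_up : ∀ ε : ℝ, 0 < ε → ∀ᵐ ω ∂P, ∀ᶠ n in atTop,
      |H n ω| ≤ (1 + ε) * a n := by
    intro ε hε
    obtain ⟨X, hX⟩ := hSSV ε hε
    set N : ℕ := max 3 ⌈X⌉₊ with hN
    set E : ℕ → Set Ω := fun n => {ω | (1 + ε) * a n < |H n ω|} with hE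
    set g : ℕ → ℝ := fun n => 2 * (1 / ((n : ℝ) * μf n ^ δs)) with hg
    have key : ∀ n : ℕ, N ≤ n → P (E n) ≤ ENNReal.ofReal (g n) := by
      intro n hn
      have hn3 : 3 ≤ n := le_trans (le_max_left _ _) hn
      have hn3' : (3:ℝ) ≤ (n:ℝ) := by exact_mod_cast hn3
      have htX : X ≤ (n:ℝ) := by
        refine le_trans (Nat.le_ceil X) ?_
        exact_mod_cast le_trans (le_max_right 3 ⌈X⌉₊) hn
      have hμpos : (1:ℝ) < μf (n:ℝ) := hμfgt _ (by linarith)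
      have hμ1 : (1:ℝ) < μf (n:ℝ) ^ δs :=
        (Real.one_lt_rpow_iff_of_pos (by linarith)).2 (Or.inl ⟨hμpos, hδs.1⟩)
      set q : ℝ := 1 / ((n:ℝ) * μf (n:ℝ) ^ δs) with hq
      have hden : (1:ℝ) < (n:ℝ) * μf (n:ℝ) ^ δs := by nlinarith
      have hqmem : q ∈ Set.Ioo (0:ℝ) 1 :=
        ⟨by positivity, by rw [div_lt_one (by linarith)]; linarith⟩
      have hpos := ha_pos n hn3
      have hble : Ginv q < (1 + ε) * a n := by
        have hb := hX (n:ℝ) htX δs ⟨hδs.1.le, hδs.2⟩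
        rw [abs_lt] at hb
        have h1 : Ginv q / a n < 1 + ε := by
          have := hb.2
          simp only [hq] at *
          linarith
        calc Ginv q = (Ginv q / a n) * a n := by field_simp
          _ < (1 + ε) * a n := by
            exact mul_lt_mul_of_pos_right h1 hpos
      have hFb : 1 - F (Ginv q) = q := hGinv q hqmem
      have hFc : 1 - F ((1 + ε) * a n) ≤ q := by
        have := hFmono hble.le
        linarith
      have hsub : E n ⊆ {ω | (1 + ε) * a n < H n ω} ∪ {ω | H n ω ≤ -((1 + ε) * a n)} := by
        intro ω hω
        simp only [hE, Set.mem_setOf_eq] at hω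
        rcases lt_or_ge ((1 + ε) * a n) (H n ω) with h | h
        · exact Or.inl h
        · refine Or.inr ?_
          simp only [Set.mem_setOf_eq]
          rcases abs_cases (H n ω) with ⟨he, _⟩ | ⟨he, _⟩
          · linarith
          · linarith
      have hbound : P (E n) ≤ ENNReal.ofReal (2 * (1 - F ((1 + ε) * a n))) := by
        refine le_trans (measure_mono hsub) (le_trans (measure_union_le _ _) ?_)
        rw [hgt n ((1 + ε) * a n)]
        have h2 : P {ω | H n ω ≤ -((1 + ε) * a n)} = ENNReal.ofReal (1 - F ((1 + ε) * a n)) := by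
          rw [hdistEq n _, hFsymm]
        rw [h2, ← ENNReal.ofReal_add (by linarith [(hFsupp ((1+ε)*a n)).2]) (by linarith [(hFsupp ((1+ε)*a n)).2])]
        exact ENNReal.ofReal_le_ofReal (by ring_nf; linarith)
      refine le_trans hbound (ENNReal.ofReal_le_ofReal ?_)
      simp only [hg]
      linarith
    -- summability
    set h : ℕ → ℝ := fun n => if n < N then 1 else g n with hh
    have hg_nonneg : ∀ n : ℕ, N ≤ n → 0 ≤ g n := by
      intro n hn
      have hn3 : 3 ≤ n := le_trans (le_max_left _ _) hn
      have hn3' : (3:ℝ) ≤ (n:ℝ) := by exact_mod_cast hn3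
      have hμpos : (1:ℝ) < μf (n:ℝ) := hμfgt _ (by linarith)
      have hμ1 : (0:ℝ) < μf (n:ℝ) ^ δs := Real.rpow_pos_of_pos (by linarith) _
      simp only [hg]
      positivity
    have hh_nonneg : ∀ n : ℕ, 0 ≤ h n := by
      intro n
      simp only [hh]
      split
      · norm_num
      · exact hg_nonneg n (by omega)
    have hhsum : Summable h := by
      have h1 : Summable (fun n : ℕ => |g n| + if n < N then 1 else 0) := by
        refine (hsum.mul_left 2).abs.add ?_
        exact summable_of_ne_finset_zero (s := Finset.range N)
          (fun b hb => by simp [Finset.mem_range] at hb; simp [hb])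
      refine Summable.of_nonneg_of_le hh_nonneg (fun n => ?_) h1
      simp only [hh]
      split_ifs with hn
      · linarith [abs_nonneg (g n)]
      · simpa using le_abs_self (g n)
    have htsum : ∑' n, P (E n) ≠ ⊤ := by
      have hle : ∑' n, P (E n) ≤ ∑' n, ENNReal.ofReal (h n) := by
        refine ENNReal.tsum_le_tsum (fun n => ?_)
        simp only [hh]
        split_ifs with hn
        · exact le_trans prob_le_one (by simp)
        · exact key n (by omega)
      refine ne_top_of_le_ne_top ?_ hle
      rw [← ENNReal.ofReal_tsum_of_nonneg hh_nonneg hhsum]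
      exact ENNReal.ofReal_ne_top
    have h0 := MeasureTheory.measure_limsup_atTop_eq_zero (μ := P) (s := E) htsum
    filter_upwards [measure_eq_zero_iff_ae_notMem.1 h0] with ω hω
    rw [mem_limsup_iff_frequently_mem, not_frequently] at hω
    exact hω.mono fun n hn => not_lt.1 hn
  -- lower bound claim
  have claim_low : ∀ ε : ℝ, 0 < ε → ∀ᵐ ω ∂P, ∃ᶠ n in atTop,
      (1 - ε) * a n < H n ω := by
    intro ε hε
    set L : ℕ → Set Ω := fun n => H n ⁻¹' Set.Ioi ((1 - ε) * a n) with hLdef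
    have hsm : ∀ n, MeasurableSet (L n) := fun n => (hHmeas n) measurableSet_Ioi
    have hind : iIndepSet L P :=
      aux_indep H hHindep _ hHmeas (fun n => measurableSet_Ioi)
    have hPL : ∀ n : ℕ, 3 ≤ n → ENNReal.ofReal (1 / (n:ℝ)) ≤ P (L n) := by
      intro n hn3
      have hpos := ha_pos n hn3
      have hle : (1 - ε) * a n ≤ a n := by nlinarith
      have hFle : F ((1 - ε) * a n) ≤ F (a n) := hFmono hle
      have hFa' : F (a n) = 1 - 1 / (n:ℝ) := hFa n (by omega)
      have : P (L n) = ENNReal.ofReal (1 - F ((1 - ε) * a n)) := by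
        rw [hLdef]
        exact hgt n _
      rw [this]
      exact ENNReal.ofReal_le_ofReal (by linarith)
    have hdiv : ∑' n, P (L n) = ⊤ := by
      rw [eq_top_iff]
      refine le_trans ?_ (ENNReal.tsum_le_tsum (f := fun n : ℕ =>
        ENNReal.ofReal (if n < 3 then 0 else 1 / (n:ℝ))) (fun n => ?_))
      · rw [top_le_iff]
        by_contra hT
        have hs2 := ENNReal.summable_toReal hT
        have hs3 : Summable (fun n : ℕ => if n < 3 then 0 else 1 / (n:ℝ)) := by
          refine hs2.congr fun n => ?_
          rw [ENNReal.toReal_ofReal (by split <;> positivity)]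
        have hs4 : Summable (fun n : ℕ => if n < 3 then 1 / (n:ℝ) else 0) :=
          summable_of_ne_finset_zero (s := Finset.range 3)
            (fun b hb => by simp [Finset.mem_range] at hb; simp [hb])
        have hs5 : Summable (fun n : ℕ => 1 / (n:ℝ)) := by
          refine (hs3.add hs4).congr fun n => ?_
          by_cases hn : n < 3 <;> simp [hn]
        exact Real.not_summable_one_div_natCast hs5
      · show ENNReal.ofReal (if n < 3 then 0 else 1 / (n:ℝ)) ≤ P (L n)
        split_ifs with hn
        · simp
        · exact hPL n (by omega)
    have hone := ProbabilityTheory.measure_limsup_eq_one hsm hind hdiv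
    have hcompl : P (limsup L atTop)ᶜ = 0 := by
      rw [measure_compl (MeasurableSet.measurableSet_limsup hsm) (measure_ne_top _ _), hone,
        measure_univ, tsub_self]
    filter_upwards [measure_eq_zero_iff_ae_notMem.1 hcompl] with ω hω
    rw [Set.notMem_compl_iff, mem_limsup_iff_frequently_mem] at hω
    exact hω.mono fun n hn => hn
  -- assembly
  have hup : ∀ᵐ ω ∂P, ∀ k : ℕ, ∀ᶠ n in atTop, |H n ω| ≤ (1 + 1/((k:ℝ)+1)) * a n :=
    ae_all_iff.2 fun k => claim_up _ (by positivity)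
  have hlow : ∀ᵐ ω ∂P, ∀ k : ℕ, ∃ᶠ n in atTop, (1 - 1/((k:ℝ)+1)) * a n < H n ω :=
    ae_all_iff.2 fun k => claim_low _ (by positivity)
  filter_upwards [hup, hlow] with ω hu hl
  set x : ℕ → EReal := fun n => ((|H n ω| / a n : ℝ) : EReal) with hx
  have hL3 : ∀ᶠ n : ℕ in atTop, 3 ≤ n := eventually_ge_atTop 3
  have hub : ∀ k : ℕ, limsup x atTop ≤ (((1 + 1/((k:ℝ)+1)) : ℝ) : EReal) := by
    intro k
    apply limsup_le_of_le
    · isBoundedDefault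
    · filter_upwards [hu k, hL3] with n hn h3
      have hpos := ha_pos n h3
      have : |H n ω| / a n ≤ 1 + 1/((k:ℝ)+1) := by
        rw [div_le_iff₀ hpos]; linarith [hn]
      exact EReal.coe_le_coe_iff.2 this
  have hlb : ∀ k : ℕ, (((1 - 1/((k:ℝ)+1)) : ℝ) : EReal) ≤ limsup x atTop := by
    intro k
    apply le_limsup_of_frequently_le
    · refine ((hl k).and_eventually hL3).mono ?_
      rintro n ⟨hn, h3⟩
      have hpos := ha_pos n h3
      have : 1 - 1/((k:ℝ)+1) ≤ |H n ω| / a n := by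
        rw [le_div_iff₀ hpos]
        calc (1 - 1/((k:ℝ)+1)) * a n ≤ H n ω := hn.le
          _ ≤ |H n ω| := le_abs_self _
      exact EReal.coe_le_coe_iff.2 this
    · isBoundedDefault
  have t0 : Tendsto (fun k : ℕ => 1/((k:ℝ)+1)) atTop (nhds 0) :=
    tendsto_one_div_add_atTop_nhds_zero_nat
  refine le_antisymm ?_ ?_
  · have t1 : Tendsto (fun k : ℕ => (((1 + 1/((k:ℝ)+1)) : ℝ) : EReal)) atTop (nhds (1:EReal)) := by
      have : Tendsto (fun k : ℕ => (1 + 1/((k:ℝ)+1) : ℝ)) atTop (nhds 1) := by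
        simpa using t0.const_add 1
      have h2 := EReal.tendsto_coe.2 this
      simpa using h2
    exact ge_of_tendsto' t1 hub
  · have t1 : Tendsto (fun k : ℕ => (((1 - 1/((k:ℝ)+1)) : ℝ) : EReal)) atTop (nhds (1:EReal)) := by
      have : Tendsto (fun k : ℕ => (1 - 1/((k:ℝ)+1) : ℝ)) atTop (nhds 1) := by
        simpa using t0.const_sub 1
      have h2 := EReal.tendsto_coe.2 this
      simpa using h2
    exact le_of_tendsto' t1 hlb
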